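/- Let H̃ and H be complex Hilbert spaces (complete inner product spaces), let K : H̃ → H be a continuous linear map that is a compact operator, let A := K† ∘ K : H̃ → H̃ where K† denotes the Hilbert-space adjoint of K, and let τ ≥ 0. If u ∈ H̃ is orthogonal to every eigenvector of A associated with a real eigenvalue λ > τ (i.e. ⟨u, e⟩ = 0 whenever e ≠ 0, λ ∈ ℝ, λ > τ and A e = λ • e), then ‖K u‖² ≤ τ ‖u‖². (This is the spectral filtering lemma underlying the coarse-space construction: after removing the high generalized eigenmodes, the local operator is bounded by √τ.) -/

import Mathlib

open scoped InnerProductSpace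

private lemma rsmul_eq_coe_smul {E : Type*} [NormedAddCommGroup E]
    [InnerProductSpace ℂ E] (r : ℝ) (x : E) : r • x = (r : ℂ) • x := by
  rw [RCLike.real_smul_eq_coe_smul (K := ℂ)]
  norm_num

/-- Spectral filtering lemma underlying the coarse-space construction:
if `u` is orthogonal to every eigenvector of `A = K† ∘ K` associated with a
real eigenvalue `λ > τ`, then `‖K u‖² ≤ τ ‖u‖²`. -/
theorem spectral_filtering
    {Ht H : Type*}
    [NormedAddCommGroup Ht] [InnerProductSpace ℂ Ht] [CompleteSpace Ht]
    [NormedAddCommGroup H] [InnerProductSpace ℂ H] [CompleteSpace H]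
    (K : Ht →L[ℂ] H) (hK : IsCompactOperator K)
    (τ : ℝ) (hτ : 0 ≤ τ) (u : Ht)
    (hu : ∀ (e : Ht) (lam : ℝ), e ≠ 0 → τ < lam →
      (ContinuousLinearMap.adjoint K ∘L K) e = (lam : ℂ) • e → ⟪u, e⟫_ℂ = 0) :
    ‖K u‖ ^ 2 ≤ τ * ‖u‖ ^ 2 := by
  classical
  set T : Ht →L[ℂ] Ht := ContinuousLinearMap.adjoint K ∘L K with hTdef
  -- T is self-adjoint
  have hadj : ContinuousLinearMap.adjoint T = T := by
    rw [hTdef, ContinuousLinearMap.adjoint_comp, ContinuousLinearMap.adjoint_adjoint]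
  have hsym : ∀ x y : Ht, ⟪T x, y⟫_ℂ = ⟪x, T y⟫_ℂ := by
    intro x y
    conv_lhs => rw [← hadj]
    exact ContinuousLinearMap.adjoint_inner_left T y x
  -- the Rayleigh quotient
  set r : Ht → ℝ := fun v => Complex.re ⟪v, T v⟫_ℂ with hrdef
  have hrK : ∀ v : Ht, r v = ‖K v‖ ^ 2 := fun v =>
    (ContinuousLinearMap.apply_norm_sq_eq_inner_adjoint_right K v).symm
  have hr_nonneg : ∀ v : Ht, 0 ≤ r v := fun v => (hrK v) ▸ sq_nonneg _
  -- re ⟪T v, w⟫ symmetric facts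
  have hre_sym : ∀ x y : Ht, Complex.re ⟪y, T x⟫_ℂ = Complex.re ⟪T x, y⟫_ℂ := by
    intro x y
    rw [← inner_conj_symm y (T x), Complex.conj_re]
  -- the "filtered" set
  set V : Set Ht := {v | ∀ (e : Ht) (lam : ℝ), e ≠ 0 → τ < lam →
      T e = (lam : ℂ) • e → ⟪v, e⟫_ℂ = 0} with hVdef
  have huV : u ∈ V := fun e lam he hlam heq => hu e lam he hlam heq
  have hV_smul : ∀ (c : ℝ) (v : Ht), v ∈ V → c • v ∈ V := by
    intro c v hv e lam he hlam heq
    rw [rsmul_eq_coe_smul c v, inner_smul_left,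
      hv e lam he hlam heq, mul_zero]
  have hTV : ∀ v ∈ V, T v ∈ V := by
    intro v hv e lam he hlam heq
    have : ⟪T v, e⟫_ℂ = ⟪v, T e⟫_ℂ := hsym v e
    rw [this, heq, inner_smul_right, hv e lam he hlam heq, mul_zero]
  -- scaling of r: r (c • v) = c^2 * r v for real c
  have hr_smul : ∀ (c : ℝ) (v : Ht), r (c • v) = c ^ 2 * r v := by
    intro c v
    have h : ⟪c • v, T (c • v)⟫_ℂ = ((c ^ 2 : ℝ) : ℂ) * ⟪v, T v⟫_ℂ := by
      rw [rsmul_eq_coe_smul c v, map_smul, inner_smul_left,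
        inner_smul_right, Complex.conj_ofReal]
      push_cast
      ring
    simp only [hrdef]
    rw [h, Complex.re_ofReal_mul]
  -- r v ≤ ‖T‖ for unit vectors (used for bddAbove)
  have hr_le_norm : ∀ v : Ht, ‖v‖ = 1 → r v ≤ ‖T‖ := by
    intro v hv
    calc r v ≤ |Complex.re ⟪v, T v⟫_ℂ| := le_abs_self _
      _ ≤ ‖⟪v, T v⟫_ℂ‖ := Complex.abs_re_le_norm _
      _ ≤ ‖v‖ * ‖T v‖ := norm_inner_le_norm _ _
      _ ≤ ‖v‖ * (‖T‖ * ‖v‖) := by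
          exact mul_le_mul_of_nonneg_left (T.le_opNorm v) (norm_nonneg _)
      _ = ‖T‖ := by rw [hv]; ring
  -- dispose of the trivial case u = 0
  rcases eq_or_ne u 0 with rfl | hu0
  · simp [hτ]
  -- the set of Rayleigh quotients over unit vectors of V
  set S : Set ℝ := r '' {v : Ht | v ∈ V ∧ ‖v‖ = 1} with hSdef
  have hu1 : (‖u‖⁻¹ • u) ∈ V ∧ ‖(‖u‖⁻¹ • u)‖ = 1 := by
    refine ⟨hV_smul _ _ huV, ?_⟩
    rw [norm_smul, norm_inv, norm_norm, inv_mul_cancel₀ (norm_ne_zero_iff.mpr hu0)]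
  have hS_ne : S.Nonempty := ⟨r (‖u‖⁻¹ • u), ⟨_, hu1, rfl⟩⟩
  have hS_bdd : BddAbove S := by
    refine ⟨‖T‖, ?_⟩
    rintro x ⟨v, ⟨hv, hv1⟩, rfl⟩
    exact hr_le_norm v hv1
  set M : ℝ := sSup S with hMdef
  have hrM : ∀ v ∈ V, r v ≤ M * ‖v‖ ^ 2 := by
    intro v hv
    rcases eq_or_ne v 0 with rfl | hv0
    · simp [hrdef]
    · have h1 : (‖v‖⁻¹ • v) ∈ V ∧ ‖(‖v‖⁻¹ • v)‖ = 1 := by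
        refine ⟨hV_smul _ _ hv, ?_⟩
        rw [norm_smul, norm_inv, norm_norm, inv_mul_cancel₀ (norm_ne_zero_iff.mpr hv0)]
      have h2 : r (‖v‖⁻¹ • v) ≤ M := le_csSup hS_bdd ⟨_, h1, rfl⟩
      have h3 : r (‖v‖⁻¹ • v) = ‖v‖⁻¹ ^ 2 * r v := hr_smul _ _
      have hvpos : (0:ℝ) < ‖v‖ ^ 2 := pow_pos (norm_pos_iff.mpr hv0) 2
      rw [h3] at h2
      rw [inv_pow] at h2
      calc r v = ‖v‖ ^ 2 * ((‖v‖ ^ 2)⁻¹ * r v) := by field_simp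
        _ ≤ ‖v‖ ^ 2 * M := mul_le_mul_of_nonneg_left h2 (le_of_lt hvpos)
        _ = M * ‖v‖ ^ 2 := mul_comm _ _
  -- the main claim: M ≤ τ
  have hMτ : M ≤ τ := by
    by_contra hM
    push_neg at hM
    have hM0 : 0 < M := lt_of_le_of_lt hτ hM
    -- norm bound ‖T x‖ ≤ M for unit x ∈ V
    have hTle : ∀ x ∈ V, ‖x‖ = 1 → ‖T x‖ ≤ M := by
      intro x hx hx1
      rcases eq_or_ne (T x) 0 with h0 | h0
      · rw [h0, norm_zero]; exact le_of_lt hM0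
      · set y : Ht := ‖T x‖⁻¹ • T x with hydef
        have hyV : y ∈ V := hV_smul _ _ (hTV x hx)
        have hy1 : ‖y‖ = 1 := by
          rw [hydef, norm_smul, norm_inv, norm_norm,
            inv_mul_cancel₀ (norm_ne_zero_iff.mpr h0)]
        -- re ⟪T x, y⟫ = ‖T x‖
        have hne : ‖T x‖ ≠ 0 := norm_ne_zero_iff.mpr h0
        have hTxy : Complex.re ⟪T x, y⟫_ℂ = ‖T x‖ := by
          have h : ⟪T x, y⟫_ℂ = ((‖T x‖⁻¹ : ℝ) : ℂ) * ((‖T x‖ : ℂ)) ^ 2 := by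
            rw [hydef, rsmul_eq_coe_smul, inner_smul_right,
              inner_self_eq_norm_sq_to_K]
            norm_num
          rw [h, ← Complex.ofReal_pow, ← Complex.ofReal_mul, Complex.ofReal_re, sq,
            ← mul_assoc, inv_mul_cancel₀ hne, one_mul]
        -- polarization with positivity
        have hpol : ⟪x + y, T (x + y)⟫_ℂ - ⟪x - y, T (x - y)⟫_ℂ
            = 2 * ⟪x, T y⟫_ℂ + 2 * ⟪y, T x⟫_ℂ := by
          rw [map_add, map_sub]
          simp only [inner_add_left, inner_add_right, inner_sub_left, inner_sub_right]
          ring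
        have hre1 : Complex.re ⟪x, T y⟫_ℂ = Complex.re ⟪T x, y⟫_ℂ := by
          rw [hsym x y]
        have hre2 : Complex.re ⟪y, T x⟫_ℂ = Complex.re ⟪T x, y⟫_ℂ := hre_sym x y
        have hpol_re : r (x + y) - r (x - y) = 4 * Complex.re ⟪T x, y⟫_ℂ := by
          have h2re := congrArg Complex.re hpol
          simp only [Complex.sub_re, Complex.add_re, Complex.mul_re, Complex.re_ofNat,
            Complex.im_ofNat, zero_mul, sub_zero] at h2re
          simp only [hrdef]
          rw [h2re, hre1, hre2]
          ring
        have h4 : 4 * ‖T x‖ ≤ 4 * M := by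
          have hxy_le : r (x + y) ≤ M * ‖x + y‖ ^ 2 := by
            have hadd : x + y ∈ V := by
              intro e lam he hlam heq
              rw [inner_add_left, hx e lam he hlam heq, hyV e lam he hlam heq, add_zero]
            exact hrM _ hadd
          have hnorm_xy : ‖x + y‖ ^ 2 ≤ 4 := by
            have := norm_add_le x y
            rw [hx1, hy1] at this
            nlinarith [norm_nonneg (x + y)]
          have h5 : 4 * ‖T x‖ = r (x + y) - r (x - y) := by
            rw [hpol_re, hTxy]
          have h6 : r (x + y) - r (x - y) ≤ r (x + y) := by
            have := hr_nonneg (x - y)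
            linarith
          have h7 : r (x + y) ≤ M * 4 := le_trans hxy_le
            (mul_le_mul_of_nonneg_left hnorm_xy (le_of_lt hM0))
          linarith
        linarith
    -- approximating sequence
    have hseq : ∀ n : ℕ, ∃ v : Ht, v ∈ V ∧ ‖v‖ = 1 ∧ M - 1 / (n + 1) < r v := by
      intro n
      have hlt : M - 1 / (n + 1) < M := by
        have : (0:ℝ) < 1 / (n + 1) := by positivity
        linarith
      obtain ⟨a, haS, hagt⟩ := exists_lt_of_lt_csSup hS_ne hlt
      obtain ⟨v, ⟨hvV, hv1⟩, rfl⟩ := haS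
      exact ⟨v, hvV, hv1, hagt⟩
    choose v hvV hv1 hvr using hseq
    -- T v n - M • v n → 0
    have hsq_bound : ∀ n : ℕ, ‖T (v n) - M • v n‖ ^ 2 ≤ 2 * M * (1 / (n + 1)) := by
      intro n
      have hexp : ‖T (v n) - M • v n‖ ^ 2
          = ‖T (v n)‖ ^ 2 - 2 * (M * r (v n)) + M ^ 2 := by
        rw [norm_sub_sq (𝕜 := ℂ)]
        simp only [RCLike.re_to_complex]
        have h1 : Complex.re ⟪T (v n), M • v n⟫_ℂ = M * r (v n) := by
          rw [rsmul_eq_coe_smul M, inner_smul_right,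
            Complex.re_ofReal_mul, ← hre_sym (v n) (v n)]
        rw [h1, norm_smul, hv1 n]
        simp [Real.norm_eq_abs, abs_of_pos hM0]
      have hTn : ‖T (v n)‖ ^ 2 ≤ M ^ 2 := by
        have := hTle (v n) (hvV n) (hv1 n)
        nlinarith [norm_nonneg (T (v n))]
      have hrn : M - 1 / (n + 1) < r (v n) := hvr n
      nlinarith [hr_nonneg (v n)]
    have htend0 : Filter.Tendsto (fun n => T (v n) - M • v n) Filter.atTop (nhds 0) := by
      rw [tendsto_zero_iff_norm_tendsto_zero]
      have hb : Filter.Tendsto (fun n : ℕ => Real.sqrt (2 * M * (1 / (n + 1))))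
          Filter.atTop (nhds 0) := by
        have h1 : Filter.Tendsto (fun n : ℕ => 2 * M * (1 / (n + 1)))
            Filter.atTop (nhds 0) := by
          have : Filter.Tendsto (fun n : ℕ => 1 / ((n : ℝ) + 1)) Filter.atTop (nhds 0) :=
            tendsto_one_div_add_atTop_nhds_zero_nat
          have h2 := this.const_mul (2 * M)
          simpa using h2
        have := (Real.continuous_sqrt.tendsto 0).comp h1
        simpa [Function.comp_def] using this
      refine squeeze_zero (fun n => norm_nonneg _) (fun n => ?_) hb
      have h1 := hsq_bound n
      have h2 : (0:ℝ) ≤ 2 * M * (1 / (n + 1)) := by positivity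
      nlinarith [norm_nonneg (T (v n) - M • v n),
        Real.sq_sqrt h2, Real.sqrt_nonneg (2 * M * (1 / (n + 1)))]
    -- compactness: extract convergent subsequence of T (v n)
    have hKT : IsCompactOperator (T : Ht → Ht) := by
      have : IsCompactOperator (⇑(ContinuousLinearMap.adjoint K) ∘ ⇑K) :=
        hK.continuous_comp (ContinuousLinearMap.adjoint K).continuous
      exact this
    have hKT' : IsCompactOperator ⇑(T.toLinearMap) := hKT
    obtain ⟨C, hC, hCsub⟩ := hKT'.image_closedBall_subset_compact 1
    have hmem : ∀ n, T (v n) ∈ C := by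
      intro n
      apply hCsub
      refine ⟨v n, ?_, rfl⟩
      rw [Metric.mem_closedBall, dist_zero_right, hv1 n]
    obtain ⟨w, hwC, φ, hφmono, hφtend⟩ := hC.tendsto_subseq hmem
    -- M • v (φ n) → w
    have htend0' : Filter.Tendsto (fun n => T (v (φ n)) - M • v (φ n))
        Filter.atTop (nhds 0) := htend0.comp hφmono.tendsto_atTop
    have hMv : Filter.Tendsto (fun n => M • v (φ n)) Filter.atTop (nhds w) := by
      have := hφtend.sub htend0'
      simpa using this
    set x : Ht := M⁻¹ • w with hxdef
    have hvx : Filter.Tendsto (fun n => v (φ n)) Filter.atTop (nhds x) := by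
      have := hMv.const_smul M⁻¹
      simpa [smul_smul, inv_mul_cancel₀ (ne_of_gt hM0)] using this
    have hx1 : ‖x‖ = 1 := by
      have h1 : Filter.Tendsto (fun n => ‖v (φ n)‖) Filter.atTop (nhds ‖x‖) :=
        (continuous_norm.tendsto x).comp hvx
      have h2 : Filter.Tendsto (fun n => ‖v (φ n)‖) Filter.atTop (nhds 1) := by
        simp only [hv1]
        exact tendsto_const_nhds
      exact tendsto_nhds_unique h1 h2
    have hx0 : x ≠ 0 := fun h => by rw [h, norm_zero] at hx1; norm_num at hx1
    -- x ∈ V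
    have hxV : x ∈ V := by
      intro e lam he hlam heq
      have h1 : Filter.Tendsto (fun n => ⟪v (φ n), e⟫_ℂ) Filter.atTop (nhds ⟪x, e⟫_ℂ) :=
        hvx.inner tendsto_const_nhds
      have h2 : ∀ n, ⟪v (φ n), e⟫_ℂ = 0 := fun n => hvV (φ n) e lam he hlam heq
      have h3 : Filter.Tendsto (fun n => ⟪v (φ n), e⟫_ℂ) Filter.atTop (nhds 0) := by
        simp only [h2]; exact tendsto_const_nhds
      exact tendsto_nhds_unique h1 h3
    -- T x = M • x
    have hTx : T x = (M : ℂ) • x := by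
      have h1 : Filter.Tendsto (fun n => T (v (φ n))) Filter.atTop (nhds (T x)) :=
        (T.continuous.tendsto x).comp hvx
      have h2 : T x = w := tendsto_nhds_unique h1 hφtend
      rw [h2, (rsmul_eq_coe_smul M x).symm, hxdef, smul_smul,
        mul_inv_cancel₀ (ne_of_gt hM0), one_smul]
    -- contradiction: x is an eigenvector with eigenvalue M > τ, yet x ∈ V
    have := hxV x M hx0 hM hTx
    rw [inner_self_eq_zero] at this
    exact hx0 this
  -- conclusion
  have h1 : r (‖u‖⁻¹ • u) ≤ M := le_csSup hS_bdd ⟨_, hu1, rfl⟩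
  have h2 : r (‖u‖⁻¹ • u) = ‖u‖⁻¹ ^ 2 * r u := hr_smul _ _
  have hupos : (0:ℝ) < ‖u‖ ^ 2 := pow_pos (norm_pos_iff.mpr hu0) 2
  have h3 : r u ≤ M * ‖u‖ ^ 2 := by
    rw [h2, inv_pow] at h1
    calc r u = ‖u‖ ^ 2 * ((‖u‖ ^ 2)⁻¹ * r u) := by field_simp
      _ ≤ ‖u‖ ^ 2 * M := mul_le_mul_of_nonneg_left h1 (le_of_lt hupos)
      _ = M * ‖u‖ ^ 2 := mul_comm _ _
  calc ‖K u‖ ^ 2 = r u := (hrK u).symm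
    _ ≤ M * ‖u‖ ^ 2 := h3
    _ ≤ τ * ‖u‖ ^ 2 := mul_le_mul_of_nonneg_right hMτ (le_of_lt hupos)
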